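/- Let X be a compact metric space with homeomorphism f, and U = A ∩ R a filtrating set (intersection of a compact attracting set A and a compact repelling set R). If x ∈ U and f(x) ∉ U, then for every n > 0 one has fⁿ(x) ∉ U. -/
import Mathlib


open Set Topology

/-- Let `U = A ∩ R` be a filtrating set (intersection of a compact attracting set `A` and
a compact repelling set `R`).  If `x ∈ U` and `f x ∉ U`, then `fⁿ(x) ∉ U` for all `n > 0`. -/
theorem filtrating_no_return
    {X : Type*} [MetricSpace X] [CompactSpace X] (f : X ≃ₜ X) (A R : Set X)
    (hA : IsCompact A) (hAattr : ⇑f '' A ⊆ interior A)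
    (hR : IsCompact R) (hRrep : ⇑f.symm '' R ⊆ interior R)
    (x : X) (hx : x ∈ A ∩ R) (hfx : f x ∉ A ∩ R) :
    ∀ n > 0, (⇑f)^[n] x ∉ A ∩ R := by
  have hAsub : ∀ y ∈ A, f y ∈ A := fun y hy =>
    interior_subset (hAattr ⟨y, hy, rfl⟩)
  have hRsub : ∀ y ∈ R, f.symm y ∈ R := fun y hy =>
    interior_subset (hRrep ⟨y, hy, rfl⟩)
  -- if f^[n] x ∈ R with n ≥ 1 then f x ∈ R
  have key : ∀ n, (⇑f)^[n + 1] x ∈ R → f x ∈ R := by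
    intro n
    induction n with
    | zero => simpa using id
    | succ m ih =>
      intro h
      apply ih
      have := hRsub _ h
      rwa [Function.iterate_succ_apply', f.symm_apply_apply] at this
  intro n hn hmem
  obtain ⟨m, rfl⟩ := Nat.exists_eq_add_of_lt hn
  exact hfx ⟨hAsub _ hx.1, key _ (by simpa [Nat.add_comm] using hmem.2)⟩
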